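/- arXiv:1207.6368 — 5 statements merged into one kernel-verified Lean document; each statement's English description precedes it below -/
import Mathlib

section
/- Let S(t) = ∑_{j=1}^k a_j e^{2πi ω_j t} with distinct integer frequencies ω_j and nonzero complex coefficients a_j, let p > 1 be an integer, and h ∈ {0,…,p−1}. Suppose I(S,h;p) = {j₀} is a singleton and ε > 0 satisfies |ω_{j₀}| < 1/(2ε). Then the frequency is exactly recovered by the phase formula: ω_{j₀} = (1/(2πε)) · Arg( Ŝ_{p,ε}[h] / Ŝ_p[h] ), where Arg denotes the principal argument of a complex number. -/
/-- The index set `I(S,h;p)` of frequencies congruent to `h` modulo `p`. -/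
def aliasIdx {k : ℕ} (ω : Fin k → ℤ) (p h : ℕ) : Finset (Fin k) :=
  Finset.univ.filter (fun j => ω j ≡ (h : ℤ) [ZMOD (p : ℤ)])

/-- The signal `S(t) = ∑ j, a j * exp(2πi ω_j t)`. -/
noncomputable def signal {k : ℕ} (a : Fin k → ℂ) (ω : Fin k → ℤ) (t : ℝ) : ℂ :=
  ∑ j, a j * Complex.exp (2 * (Real.pi : ℂ) * Complex.I * (ω j : ℂ) * (t : ℂ))

/-- The shifted sub-sampled DFT `Ŝ_{p,ε}[h]`. -/
noncomputable def sdft {k : ℕ} (a : Fin k → ℂ) (ω : Fin k → ℤ) (p : ℕ) (ε : ℝ) (h : ℕ) : ℂ :=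
  ∑ n ∈ Finset.range p,
    signal a ω ((n : ℝ) / (p : ℝ) + ε) *
      Complex.exp (-(2 * (Real.pi : ℂ) * Complex.I) * (n : ℂ) * (h : ℂ) / (p : ℂ))

open Complex Finset in
lemma geom_aux (p : ℕ) (hp : 0 < p) (m : ℤ) :
    ∑ n ∈ Finset.range p, Complex.exp (2 * (Real.pi:ℂ) * Complex.I * (m:ℂ) / (p:ℂ)) ^ n
      = if (p:ℤ) ∣ m then (p : ℂ) else 0 := by
  have hp0 : (p:ℂ) ≠ 0 := Nat.cast_ne_zero.2 hp.ne'
  have hpi : (2 * (Real.pi:ℂ) * Complex.I) ≠ 0 := by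
    simp [Real.pi_ne_zero, Complex.I_ne_zero]
  split_ifs with hd
  · obtain ⟨q, hq⟩ := hd
    have he : (2 * (Real.pi:ℂ) * Complex.I * (m:ℂ) / (p:ℂ)) = (q:ℂ) * (2 * (Real.pi:ℂ) * Complex.I) := by
      rw [hq]; push_cast; field_simp
    rw [he, Complex.exp_int_mul_two_pi_mul_I]
    simp
  · have hζp : Complex.exp (2 * (Real.pi:ℂ) * Complex.I * (m:ℂ) / (p:ℂ)) ^ p = 1 := by
      rw [← Complex.exp_nat_mul]
      have : (p:ℂ) * (2 * (Real.pi:ℂ) * Complex.I * (m:ℂ) / (p:ℂ)) = (m:ℂ) * (2 * (Real.pi:ℂ) * Complex.I) := by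
        field_simp
      rw [this, Complex.exp_int_mul_two_pi_mul_I]
    have hζ1 : Complex.exp (2 * (Real.pi:ℂ) * Complex.I * (m:ℂ) / (p:ℂ)) ≠ 1 := by
      intro h1
      rw [Complex.exp_eq_one_iff] at h1
      obtain ⟨n, hn⟩ := h1
      apply hd
      have hm : (m:ℂ) = (p:ℂ) * (n:ℂ) := by
        apply mul_left_cancel₀ hpi
        field_simp at hn
        linear_combination (2 * (Real.pi:ℂ) * Complex.I) * hn
      exact ⟨n, by exact_mod_cast hm⟩
    rw [geom_sum_eq hζ1, hζp]
    simp

lemma sdft_eq {k : ℕ} (a : Fin k → ℂ) (ω : Fin k → ℤ) (p : ℕ) (hp : 0 < p) (h : ℕ)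
    (j₀ : Fin k) (hsingle : aliasIdx ω p h = {j₀}) (ε : ℝ) :
    sdft a ω p ε h
      = (p:ℂ) * a j₀ * Complex.exp (2 * (Real.pi:ℂ) * Complex.I * (ω j₀ : ℂ) * (ε:ℂ)) := by
  have hp0 : (p:ℂ) ≠ 0 := Nat.cast_ne_zero.2 hp.ne'
  have key : sdft a ω p ε h
      = ∑ j, (a j * Complex.exp (2 * (Real.pi:ℂ) * Complex.I * (ω j : ℂ) * (ε:ℂ))) *
          ∑ n ∈ Finset.range p,
            Complex.exp (2 * (Real.pi:ℂ) * Complex.I * ((ω j - h : ℤ):ℂ) / (p:ℂ)) ^ n := by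
    unfold sdft signal
    simp only [Finset.sum_mul]
    rw [Finset.sum_comm]
    refine Finset.sum_congr rfl (fun j _ => ?_)
    rw [Finset.mul_sum]
    refine Finset.sum_congr rfl (fun n _ => ?_)
    rw [← Complex.exp_nat_mul]
    simp only [mul_assoc, ← Complex.exp_add]
    congr 2
    push_cast
    ring
  rw [key]
  have step : ∀ j : Fin k,
      (a j * Complex.exp (2 * (Real.pi:ℂ) * Complex.I * (ω j : ℂ) * (ε:ℂ))) *
        ∑ n ∈ Finset.range p,
          Complex.exp (2 * (Real.pi:ℂ) * Complex.I * ((ω j - h : ℤ):ℂ) / (p:ℂ)) ^ n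
      = if ω j ≡ (h:ℤ) [ZMOD (p:ℤ)] then
          (a j * Complex.exp (2 * (Real.pi:ℂ) * Complex.I * (ω j : ℂ) * (ε:ℂ))) * p else 0 := by
    intro j
    rw [geom_aux p hp (ω j - h)]
    have hiff : ((p:ℤ) ∣ (ω j - h)) ↔ (ω j ≡ (h:ℤ) [ZMOD (p:ℤ)]) := by
      rw [Int.modEq_iff_dvd]
      exact dvd_sub_comm
    rw [mul_ite, mul_zero]
    exact if_congr hiff rfl rfl
  simp only [step]
  rw [← Finset.sum_filter]
  rw [show (Finset.univ.filter (fun j => ω j ≡ (h:ℤ) [ZMOD (p:ℤ)])) = aliasIdx ω p h from rfl,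
    hsingle, Finset.sum_singleton]
  ring

theorem stmt2 {k : ℕ} (a : Fin k → ℂ) (ω : Fin k → ℤ) (hω : Function.Injective ω)
    (ha : ∀ j, a j ≠ 0) (p : ℕ) (hp : 1 < p) (h : ℕ) (hh : h < p)
    (j₀ : Fin k) (hsingle : aliasIdx ω p h = {j₀})
    (ε : ℝ) (hε : 0 < ε) (hfreq : |(ω j₀ : ℝ)| < 1 / (2 * ε)) :
    (ω j₀ : ℝ) =
      (1 / (2 * Real.pi * ε)) * Complex.arg (sdft a ω p ε h / sdft a ω p 0 h) := by
  have hp' : 0 < p := by omega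
  have hp0 : (p:ℂ) ≠ 0 := Nat.cast_ne_zero.2 hp'.ne'
  have h1 := sdft_eq a ω p hp' h j₀ hsingle ε
  have h2 := sdft_eq a ω p hp' h j₀ hsingle 0
  have hratio : sdft a ω p ε h / sdft a ω p 0 h
      = Complex.exp (2 * (Real.pi:ℂ) * Complex.I * (ω j₀ : ℂ) * (ε:ℂ)) := by
    rw [h1, h2]
    simp only [Complex.ofReal_zero, mul_zero, Complex.exp_zero, mul_one]
    exact mul_div_cancel_left₀ _ (mul_ne_zero hp0 (ha j₀))
  have hexp : (2 * (Real.pi:ℂ) * Complex.I * (ω j₀:ℂ) * (ε:ℂ))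
      = ((2 * Real.pi * (ω j₀ : ℝ) * ε : ℝ) : ℂ) * Complex.I := by
    push_cast; ring
  have hθ : 2 * Real.pi * (ω j₀ : ℝ) * ε ∈ Set.Ioc (-Real.pi) Real.pi := by
    have hb : |(ω j₀:ℝ)| * (2*ε) < 1 := by
      rw [← lt_div_iff₀ (by positivity)]; exact hfreq
    have hl := neg_abs_le ((ω j₀:ℝ))
    have hr := le_abs_self ((ω j₀:ℝ))
    have hπε : (0:ℝ) < 2 * Real.pi * ε := by positivity
    have k1 : Real.pi * (|(ω j₀:ℝ)| * (2*ε)) < Real.pi * 1 :=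
      mul_lt_mul_of_pos_left hb Real.pi_pos
    have k2 : (2*Real.pi*ε) * (ω j₀:ℝ) ≤ (2*Real.pi*ε) * |(ω j₀:ℝ)| :=
      mul_le_mul_of_nonneg_left hr hπε.le
    have k3 : (2*Real.pi*ε) * (-|(ω j₀:ℝ)|) ≤ (2*Real.pi*ε) * (ω j₀:ℝ) :=
      mul_le_mul_of_nonneg_left hl hπε.le
    constructor
    · nlinarith
    · nlinarith
  rw [hratio, hexp, Complex.exp_mul_I]
  rw [Complex.arg_cos_add_sin_mul_I hθ]
  have hπ := Real.pi_ne_zero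
  field_simp
end

section
/- (Lemma 1, part B.) Let S(t) = ∑_{j=1}^k a_j e^{2πi ω_j t} with distinct integer frequencies ω_j and nonzero complex coefficients a_j, let p > 1 be an integer and h ∈ {0,…,p−1}, and suppose |I(S,h;p)| > 1 (i.e., more than one frequency is congruent to h modulo p). Then the set of ε ∈ [0,1) for which |Ŝ_{p,ε}[h]| = |Ŝ_p[h]| is finite; equivalently, for all but finitely many ε ∈ [0,1), |Ŝ_{p,ε}[h]| ≠ |Ŝ_p[h]|. -/
lemma mem_aliasIdx_iff {k : ℕ} (ω : Fin k → ℤ) (p h : ℕ) (j : Fin k) :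
    j ∈ aliasIdx ω p h ↔ (p : ℤ) ∣ (ω j - h) := by
  simp only [aliasIdx, Finset.mem_filter, Finset.mem_univ, true_and]
  rw [Int.modEq_iff_dvd]
  exact ⟨fun hd => (dvd_sub_comm).mp hd, fun hd => (dvd_sub_comm).mp hd⟩

noncomputable def bcoef {k : ℕ} (a : Fin k → ℂ) (ω : Fin k → ℤ) (p h : ℕ) (j : Fin k) : ℂ :=
  a j * ∑ n ∈ Finset.range p,
    Complex.exp (2 * (Real.pi : ℂ) * Complex.I * ((ω j : ℂ) - h) * n / p)

lemma sdft_eq_bcoef {k : ℕ} (a : Fin k → ℂ) (ω : Fin k → ℤ) (p : ℕ) (hp : 0 < p) (h : ℕ)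
    (ε : ℝ) :
    sdft a ω p ε h = ∑ j, bcoef a ω p h j *
      Complex.exp (2 * (Real.pi : ℂ) * Complex.I * (ω j : ℂ) * (ε : ℝ)) := by
  have hp0 : (p : ℂ) ≠ 0 := Nat.cast_ne_zero.mpr hp.ne'
  unfold sdft signal bcoef
  simp only [Finset.sum_mul, Finset.mul_sum]
  rw [Finset.sum_comm]
  refine Finset.sum_congr rfl fun j _ => Finset.sum_congr rfl fun n _ => ?_
  rw [mul_assoc, ← Complex.exp_add]
  conv_rhs => rw [mul_assoc, ← Complex.exp_add]
  congr 1
  push_cast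
  field_simp
  ring

lemma bcoef_mem {k : ℕ} (a : Fin k → ℂ) (ω : Fin k → ℤ) (p : ℕ) (hp : 0 < p) (h : ℕ)
    (j : Fin k) (hj : j ∈ aliasIdx ω p h) : bcoef a ω p h j = (p : ℂ) * a j := by
  have hp0 : (p : ℂ) ≠ 0 := Nat.cast_ne_zero.mpr hp.ne'
  obtain ⟨m, hm⟩ := (mem_aliasIdx_iff ω p h j).mp hj
  unfold bcoef
  have : ∀ n ∈ Finset.range p,
      Complex.exp (2 * (Real.pi : ℂ) * Complex.I * ((ω j : ℂ) - h) * n / p) = 1 := by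
    intro n _
    have harg : 2 * (Real.pi : ℂ) * Complex.I * ((ω j : ℂ) - h) * n / p
        = ((m * n : ℤ) : ℂ) * (2 * (Real.pi : ℂ) * Complex.I) := by
      have : ((ω j : ℂ) - h) = (p : ℂ) * m := by
        exact_mod_cast congrArg (Int.cast : ℤ → ℂ) hm
      rw [this]
      push_cast
      field_simp
    rw [harg, Complex.exp_int_mul_two_pi_mul_I]
  rw [Finset.sum_congr rfl this]
  simp [mul_comm]

lemma bcoef_not_mem {k : ℕ} (a : Fin k → ℂ) (ω : Fin k → ℤ) (p : ℕ) (hp : 0 < p) (h : ℕ)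
    (j : Fin k) (hj : j ∉ aliasIdx ω p h) : bcoef a ω p h j = 0 := by
  have hp0 : (p : ℂ) ≠ 0 := Nat.cast_ne_zero.mpr hp.ne'
  have hnd : ¬ (p : ℤ) ∣ (ω j - h) := fun hd => hj ((mem_aliasIdx_iff ω p h j).mpr hd)
  set z : ℂ := Complex.exp (2 * (Real.pi : ℂ) * Complex.I * ((ω j : ℂ) - h) / p) with hz
  have hterm : ∀ n : ℕ,
      Complex.exp (2 * (Real.pi : ℂ) * Complex.I * ((ω j : ℂ) - h) * n / p) = z ^ n := by
    intro n
    rw [hz, ← Complex.exp_nat_mul]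
    congr 1
    ring
  have hz1 : z ≠ 1 := by
    intro h1
    rw [hz, Complex.exp_eq_one_iff] at h1
    obtain ⟨m, hm⟩ := h1
    apply hnd
    refine ⟨m, ?_⟩
    have h2pi : (2 * (Real.pi : ℂ) * Complex.I) ≠ 0 := by
      simp [Real.pi_ne_zero, Complex.I_ne_zero]
    field_simp at hm
    have h3 : (2 * (Real.pi : ℂ) * Complex.I) * ((ω j : ℂ) - h)
        = (2 * (Real.pi : ℂ) * Complex.I) * ((m : ℂ) * p) := by linear_combination (2 * (Real.pi : ℂ) * Complex.I) * hm
    have h4 := mul_left_cancel₀ h2pi h3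
    have h5 : ((ω j - h : ℤ) : ℂ) = ((p * m : ℤ) : ℂ) := by push_cast; linear_combination h4
    exact_mod_cast h5
  have hzp : z ^ p = 1 := by
    rw [hz, ← Complex.exp_nat_mul]
    have : (p : ℂ) * (2 * (Real.pi : ℂ) * Complex.I * ((ω j : ℂ) - h) / p)
        = ((ω j - h : ℤ) : ℂ) * (2 * (Real.pi : ℂ) * Complex.I) := by
      push_cast; field_simp
    rw [this, Complex.exp_int_mul_two_pi_mul_I]
  unfold bcoef
  rw [Finset.sum_congr rfl (fun n _ => hterm n), geom_sum_eq hz1, hzp]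
  simp

noncomputable def chars (m : ℤ) : Multiplicative ℝ →* ℂ where
  toFun ε := Complex.exp (2 * (Real.pi : ℂ) * Complex.I * m * ((Multiplicative.toAdd ε : ℝ) : ℂ))
  map_one' := by simp
  map_mul' x y := by
    show Complex.exp _ = Complex.exp _ * Complex.exp _
    rw [← Complex.exp_add]
    congr 1
    have : (Multiplicative.toAdd (x * y) : ℝ) = (Multiplicative.toAdd x : ℝ) + (Multiplicative.toAdd y : ℝ) := rfl
    rw [this]
    push_cast
    ring

lemma chars_injective : Function.Injective chars := by
  intro m m' hmm
  by_contra hne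
  have hd : ((m - m' : ℤ) : ℝ) ≠ 0 := by
    exact_mod_cast sub_ne_zero.mpr hne
  set ε : ℝ := 1 / (2 * ((m - m' : ℤ) : ℝ)) with hε
  have := congrArg (fun f : Multiplicative ℝ →* ℂ => f (Multiplicative.ofAdd ε)) hmm
  simp only [chars, MonoidHom.coe_mk, OneHom.coe_mk, toAdd_ofAdd] at this
  have h1 : Complex.exp (2 * (Real.pi : ℂ) * Complex.I * m * (ε : ℂ) -
      2 * (Real.pi : ℂ) * Complex.I * m' * (ε : ℂ)) = 1 := by
    rw [Complex.exp_sub, this, div_self (Complex.exp_ne_zero _)]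
  have h2 : (2 * (Real.pi : ℂ) * Complex.I * m * (ε : ℂ) -
      2 * (Real.pi : ℂ) * Complex.I * m' * (ε : ℂ)) = (Real.pi : ℂ) * Complex.I := by
    have hdc : ((m : ℂ) - m') ≠ 0 := sub_ne_zero.mpr (by exact_mod_cast hne)
    have hεc : ((m : ℂ) - m') * (ε : ℂ) = 1 / 2 := by
      rw [hε]
      push_cast
      field_simp
    linear_combination (2 * (Real.pi : ℂ) * Complex.I) * hεc
  rw [h2, Complex.exp_pi_mul_I] at h1
  norm_num at h1

lemma chars_li : LinearIndependent ℂ (fun m : ℤ => ⇑(chars m)) :=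
  (linearIndependent_monoidHom (Multiplicative ℝ) ℂ).comp chars chars_injective

lemma analytic_cexp_mul (c : ℂ) :
    AnalyticOnNhd ℝ (fun ε : ℝ => Complex.exp (c * (ε : ℂ))) Set.univ := by
  have h1 : AnalyticOnNhd ℝ (fun ε : ℝ => c * (ε : ℂ)) Set.univ :=
    analyticOnNhd_const.mul (Complex.ofRealCLM.analyticOnNhd _)
  have h2 : AnalyticOnNhd ℝ Complex.exp Set.univ := analyticOnNhd_cexp.restrictScalars
  exact h2.comp h1 (fun x _ => trivial)

theorem stmt5 {k : ℕ} (a : Fin k → ℂ) (ω : Fin k → ℤ) (hω : Function.Injective ω)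
    (ha : ∀ j, a j ≠ 0) (p : ℕ) (hp : 1 < p) (h : ℕ) (hh : h < p)
    (hq : 1 < (aliasIdx ω p h).card) :
    {ε ∈ Set.Ico (0 : ℝ) 1 |
      ‖sdft a ω p ε h‖ = ‖sdft a ω p 0 h‖}.Finite := by
  by_contra hfin
  have hinf : {ε ∈ Set.Ico (0 : ℝ) 1 |
      ‖sdft a ω p ε h‖ = ‖sdft a ω p 0 h‖}.Infinite := hfin
  have hp0 : 0 < p := lt_trans one_pos hp
  have hpc : (p : ℂ) ≠ 0 := Nat.cast_ne_zero.mpr hp0.ne'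
  set T := aliasIdx ω p h with hT
  set b : Fin k → ℂ := fun j => (p : ℂ) * a j with hb
  have hsd : ∀ ε : ℝ, sdft a ω p ε h
      = ∑ j ∈ T, b j * Complex.exp (2 * (Real.pi : ℂ) * Complex.I * (ω j : ℂ) * (ε : ℂ)) := by
    intro ε
    rw [sdft_eq_bcoef a ω p hp0 h ε]
    rw [← Finset.sum_subset (Finset.subset_univ T)]
    · exact Finset.sum_congr rfl fun j hj => by rw [bcoef_mem a ω p hp0 h j hj]
    · intro j _ hj
      rw [bcoef_not_mem a ω p hp0 h j hj, zero_mul]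
  set G : ℝ → ℂ := fun ε => ∑ q ∈ T ×ˢ T, b q.1 * (starRingEnd ℂ) (b q.2) *
      Complex.exp (2 * (Real.pi : ℂ) * Complex.I * ((ω q.1 - ω q.2 : ℤ) : ℂ) * (ε : ℂ)) with hG
  have hGf : ∀ ε : ℝ, G ε = sdft a ω p ε h * (starRingEnd ℂ) (sdft a ω p ε h) := by
    intro ε
    rw [hsd ε, map_sum, Finset.sum_mul_sum]
    simp only [hG]
    rw [Finset.sum_product]
    refine Finset.sum_congr rfl fun j _ => Finset.sum_congr rfl fun l _ => ?_
    dsimp only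
    have hc : (starRingEnd ℂ) (2 * (Real.pi : ℂ) * Complex.I * (ω l : ℂ) * (ε : ℂ))
        = -(2 * (Real.pi : ℂ) * Complex.I * (ω l : ℂ) * (ε : ℂ)) := by
      simp only [map_mul, map_ofNat, Complex.conj_ofReal, Complex.conj_I, map_intCast]
      ring
    conv_rhs => rw [map_mul, ← Complex.exp_conj, hc, mul_mul_mul_comm, ← Complex.exp_add]
    congr 1
    push_cast
    ring
  -- members of the set satisfy G ε = G 0
  have hmem : ∀ ε ∈ {ε ∈ Set.Ico (0 : ℝ) 1 |
      ‖sdft a ω p ε h‖ = ‖sdft a ω p 0 h‖}, G ε = G 0 := by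
    intro ε hε
    have habs : ‖sdft a ω p ε h‖ = ‖sdft a ω p 0 h‖ := hε.2
    have hns : Complex.normSq (sdft a ω p ε h) = Complex.normSq (sdft a ω p 0 h) := by
      rw [← Complex.sq_norm, ← Complex.sq_norm, habs]
    rw [hGf ε, hGf 0, Complex.mul_conj, Complex.mul_conj, hns]
  -- accumulation point
  have hsub : {ε ∈ Set.Ico (0 : ℝ) 1 |
      ‖sdft a ω p ε h‖ = ‖sdft a ω p 0 h‖} ⊆ Set.Icc (0 : ℝ) 1 :=
    fun ε hε => ⟨hε.1.1, le_of_lt hε.1.2⟩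
  obtain ⟨x, _, hacc⟩ := hinf.exists_accPt_of_subset_isCompact isCompact_Icc hsub
  have hfreq : ∃ᶠ y in nhdsWithin x {x}ᶜ, G y - G 0 = 0 := by
    have h1 := accPt_iff_frequently.mp hacc
    rw [frequently_nhdsWithin_iff]
    refine h1.mono fun y hy => ?_
    exact ⟨sub_eq_zero.mpr (hmem y hy.2), hy.1⟩
  have hanal : AnalyticOnNhd ℝ (fun ε : ℝ => G ε - G 0) Set.univ := by
    apply AnalyticOnNhd.sub ?_ analyticOnNhd_const
    rw [hG]
    apply Finset.analyticOnNhd_fun_sum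
    intro q _
    exact analyticOnNhd_const.mul (analytic_cexp_mul _)
  have heq := hanal.eqOn_zero_of_preconnected_of_frequently_eq_zero isPreconnected_univ
    (Set.mem_univ x) hfreq
  have hGconst : ∀ ε : ℝ, G ε = G 0 := fun ε => sub_eq_zero.mp (heq (Set.mem_univ ε))
  -- coefficient extraction
  set D : Finset ℤ := insert 0 ((T ×ˢ T).image fun q => ω q.1 - ω q.2) with hD
  set c : ℤ → ℂ := fun m =>
    (∑ q ∈ (T ×ˢ T).filter (fun q => ω q.1 - ω q.2 = m), b q.1 * (starRingEnd ℂ) (b q.2)) -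
      (if m = 0 then G 0 else 0) with hc
  have hzero : ∑ m ∈ D, c m • (fun m : ℤ => ⇑(chars m)) m = 0 := by
    funext x'
    simp only [Finset.sum_apply, Pi.smul_apply, smul_eq_mul, Pi.zero_apply]
    set ε : ℝ := Multiplicative.toAdd x' with hε
    have hch : ∀ m : ℤ, (chars m) x'
        = Complex.exp (2 * (Real.pi : ℂ) * Complex.I * (m : ℂ) * (ε : ℂ)) := by
      intro m; rfl
    simp only [hch, hc, sub_mul]
    rw [Finset.sum_sub_distrib]
    have hmaps : ∀ q ∈ T ×ˢ T, (fun q : Fin k × Fin k => ω q.1 - ω q.2) q ∈ D := by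
      intro q hq
      exact Finset.mem_insert_of_mem (Finset.mem_image.mpr ⟨q, hq, rfl⟩)
    have key := Finset.sum_fiberwise_of_maps_to hmaps
      (fun q : Fin k × Fin k => b q.1 * (starRingEnd ℂ) (b q.2) *
        Complex.exp (2 * (Real.pi : ℂ) * Complex.I * ((ω q.1 - ω q.2 : ℤ) : ℂ) * (ε : ℂ)))
    have h1 : ∑ m ∈ D, (∑ q ∈ (T ×ˢ T).filter (fun q => ω q.1 - ω q.2 = m),
        b q.1 * (starRingEnd ℂ) (b q.2)) *
          Complex.exp (2 * (Real.pi : ℂ) * Complex.I * (m : ℂ) * (ε : ℂ)) = G ε := by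
      have hstep : ∀ m ∈ D, (∑ q ∈ (T ×ˢ T).filter (fun q => ω q.1 - ω q.2 = m),
          b q.1 * (starRingEnd ℂ) (b q.2)) *
            Complex.exp (2 * (Real.pi : ℂ) * Complex.I * (m : ℂ) * (ε : ℂ))
          = ∑ q ∈ (T ×ˢ T).filter (fun q => ω q.1 - ω q.2 = m),
              b q.1 * (starRingEnd ℂ) (b q.2) *
                Complex.exp (2 * (Real.pi : ℂ) * Complex.I * ((ω q.1 - ω q.2 : ℤ) : ℂ) * (ε : ℂ)) := by
        intro m _
        rw [Finset.sum_mul]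
        refine Finset.sum_congr rfl fun q hq => ?_
        rw [(Finset.mem_filter.mp hq).2]
      rw [Finset.sum_congr rfl hstep, key]
    have h2 : ∑ m ∈ D, (if m = 0 then G 0 else 0) *
        Complex.exp (2 * (Real.pi : ℂ) * Complex.I * (m : ℂ) * (ε : ℂ)) = G 0 := by
      rw [Finset.sum_eq_single_of_mem 0 (Finset.mem_insert_self 0 _)]
      · simp
      · intro m _ hm; simp [hm]
    rw [h1, h2, hGconst ε, sub_self]
  have hcoef := linearIndependent_iff'.mp chars_li D c hzero
  -- the top coefficient is nonzero: contradiction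
  have hTne : T.Nonempty := Finset.card_pos.mp (lt_trans one_pos hq)
  obtain ⟨j1, hj1T, hj1max⟩ := Finset.exists_max_image T ω hTne
  obtain ⟨j0, hj0T, hj0min⟩ := Finset.exists_min_image T ω hTne
  obtain ⟨u, v, huT, hvT, huv⟩ := Finset.one_lt_card_iff.mp hq
  have hωuv : ω u ≠ ω v := fun he => huv (hω he)
  have hMpos : ω j0 < ω j1 := by
    have h1 := hj0min u huT; have h2 := hj0min v hvT
    have h3 := hj1max u huT; have h4 := hj1max v hvT
    omega
  have hM0 : ω j1 - ω j0 ≠ 0 := by omega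
  have hMD : ω j1 - ω j0 ∈ D := Finset.mem_insert_of_mem
    (Finset.mem_image.mpr ⟨(j1, j0), Finset.mem_product.mpr ⟨hj1T, hj0T⟩, rfl⟩)
  have hcM := hcoef _ hMD
  have hfib : (T ×ˢ T).filter (fun q => ω q.1 - ω q.2 = ω j1 - ω j0) = {(j1, j0)} := by
    ext q
    simp only [Finset.mem_filter, Finset.mem_product, Finset.mem_singleton]
    constructor
    · rintro ⟨⟨hq1, hq2⟩, hqd⟩
      have h1 := hj1max q.1 hq1
      have h2 := hj0min q.2 hq2
      have e1 : ω q.1 = ω j1 := by omega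
      have e2 : ω q.2 = ω j0 := by omega
      exact Prod.ext (hω e1) (hω e2)
    · rintro rfl
      exact ⟨⟨hj1T, hj0T⟩, rfl⟩
  rw [hc] at hcM
  simp only [hfib, Finset.sum_singleton, if_neg hM0, sub_zero] at hcM
  exact (mul_ne_zero (mul_ne_zero hpc (ha j1))
    (star_ne_zero.mpr (mul_ne_zero hpc (ha j0)))) hcM
end

section
/- Let S(t) = a₁ e^{2πi ω₁ t} + a₂ e^{2πi ω₂ t} + (other terms), where ω₁ ≠ ω₂ are integers in [−N/2, N/2), the coefficients a₁, a₂ are nonzero real numbers, p > 1 is an integer, h ∈ {0,…,p−1}, and I(S,h;p) = {1, 2}, i.e., exactly the two frequencies ω₁, ω₂ are congruent to h modulo p. Then for any ε = a/b with a, b coprime integers, a ≠ 0, and b ≥ N, one has |Ŝ_{p,ε}[h]| ≠ |Ŝ_p[h]|. -/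
lemma sum_zeta (p : ℕ) (hp : 0 < p) (m : ℤ) :
    ∑ n ∈ Finset.range p, Complex.exp (2 * (Real.pi : ℂ) * Complex.I * m / p) ^ n
      = if (p : ℤ) ∣ m then (p : ℂ) else 0 := by
  have hp0 : (p : ℂ) ≠ 0 := Nat.cast_ne_zero.2 hp.ne'
  have h2 : (2 * (Real.pi : ℂ) * Complex.I) ≠ 0 := by
    simp [Real.pi_ne_zero, Complex.I_ne_zero]
  by_cases hd : (p : ℤ) ∣ m
  · obtain ⟨q, rfl⟩ := hd
    have hbase : Complex.exp (2 * (Real.pi : ℂ) * Complex.I * (((p : ℤ) * q : ℤ) : ℂ) / p) = 1 := by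
      have he : (2 * (Real.pi : ℂ) * Complex.I * (((p : ℤ) * q : ℤ) : ℂ) / p) = (q : ℂ) * (2 * Real.pi * Complex.I) := by
        push_cast
        field_simp
      rw [he, Complex.exp_int_mul_two_pi_mul_I]
    rw [hbase]
    simp
  · have hζ : Complex.exp (2 * (Real.pi : ℂ) * Complex.I * m / p) ≠ 1 := by
      intro h1
      rw [Complex.exp_eq_one_iff] at h1
      obtain ⟨n, hn⟩ := h1
      apply hd
      refine ⟨n, ?_⟩
      have key : (m : ℂ) * (2 * Real.pi * Complex.I) = ((p : ℂ) * n) * (2 * Real.pi * Complex.I) := by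
        rw [div_eq_iff hp0] at hn
        linear_combination hn
      have : (m : ℂ) = (p : ℂ) * n := mul_right_cancel₀ h2 key
      exact_mod_cast this
    rw [geom_sum_eq hζ]
    have hpow : Complex.exp (2 * (Real.pi : ℂ) * Complex.I * m / p) ^ p = 1 := by
      rw [← Complex.exp_nat_mul]
      have he : (p : ℂ) * (2 * (Real.pi : ℂ) * Complex.I * m / p) = (m : ℂ) * (2 * Real.pi * Complex.I) := by
        field_simp
      rw [he, Complex.exp_int_mul_two_pi_mul_I]
    rw [hpow]
    simp [hd]

lemma sdft_eq' {k : ℕ} (a : Fin k → ℂ) (ω : Fin k → ℤ) (p : ℕ) (hp : 0 < p) (ε : ℝ) (h : ℕ) :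
    (∑ n ∈ Finset.range p,
      (∑ j, a j * Complex.exp (2 * (Real.pi : ℂ) * Complex.I * (ω j : ℂ) * (((n : ℝ) / (p : ℝ) + ε : ℝ) : ℂ))) *
        Complex.exp (-(2 * (Real.pi : ℂ) * Complex.I) * (n : ℂ) * (h : ℂ) / (p : ℂ)))
      = (p : ℂ) * ∑ j ∈ Finset.univ.filter (fun j => (p : ℤ) ∣ (ω j - h)),
          a j * Complex.exp (2 * (Real.pi : ℂ) * Complex.I * (ω j : ℂ) * (ε : ℂ)) := by
  have hp0 : (p : ℂ) ≠ 0 := Nat.cast_ne_zero.2 hp.ne'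
  have step1 : ∀ n ∈ Finset.range p,
      (∑ j, a j * Complex.exp (2 * (Real.pi : ℂ) * Complex.I * (ω j : ℂ) * (((n : ℝ) / (p : ℝ) + ε : ℝ) : ℂ))) *
        Complex.exp (-(2 * (Real.pi : ℂ) * Complex.I) * (n : ℂ) * (h : ℂ) / (p : ℂ))
      = ∑ j, (a j * Complex.exp (2 * (Real.pi : ℂ) * Complex.I * (ω j : ℂ) * (ε : ℂ))) *
          Complex.exp (2 * (Real.pi : ℂ) * Complex.I * ((ω j - h : ℤ) : ℂ) / p) ^ n := by
    intro n _
    rw [Finset.sum_mul]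
    refine Finset.sum_congr rfl fun j _ => ?_
    rw [← Complex.exp_nat_mul]
    have key : Complex.exp (2 * (Real.pi : ℂ) * Complex.I * (ω j : ℂ) * (((n : ℝ) / (p : ℝ) + ε : ℝ) : ℂ)) *
        Complex.exp (-(2 * (Real.pi : ℂ) * Complex.I) * (n : ℂ) * (h : ℂ) / (p : ℂ))
        = Complex.exp (2 * (Real.pi : ℂ) * Complex.I * (ω j : ℂ) * (ε : ℂ)) *
          Complex.exp ((n : ℂ) * (2 * (Real.pi : ℂ) * Complex.I * ((ω j - h : ℤ) : ℂ) / p)) := by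
      rw [← Complex.exp_add, ← Complex.exp_add]
      congr 1
      push_cast
      field_simp
      ring
    linear_combination (a j) * key
  rw [Finset.sum_congr rfl step1, Finset.sum_comm]
  have step2 : ∀ j : Fin k,
      (∑ n ∈ Finset.range p, (a j * Complex.exp (2 * (Real.pi : ℂ) * Complex.I * (ω j : ℂ) * (ε : ℂ))) *
          Complex.exp (2 * (Real.pi : ℂ) * Complex.I * ((ω j - h : ℤ) : ℂ) / p) ^ n)
      = (a j * Complex.exp (2 * (Real.pi : ℂ) * Complex.I * (ω j : ℂ) * (ε : ℂ))) *
          (if (p : ℤ) ∣ (ω j - h) then (p : ℂ) else 0) := by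
    intro j
    rw [← Finset.mul_sum, sum_zeta p hp (ω j - h)]
  rw [Finset.sum_congr rfl (fun j _ => step2 j), Finset.mul_sum, Finset.sum_filter]
  refine Finset.sum_congr rfl fun j _ => ?_
  split <;> ring

lemma normSq_combo (r₁ r₂ θ₁ θ₂ : ℝ) :
    Complex.normSq ((r₁ : ℂ) * Complex.exp ((θ₁ : ℂ) * Complex.I) +
        (r₂ : ℂ) * Complex.exp ((θ₂ : ℂ) * Complex.I))
      = r₁ ^ 2 + r₂ ^ 2 + 2 * r₁ * r₂ * Real.cos (θ₁ - θ₂) := by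
  simp [Complex.normSq_apply, Complex.add_re, Complex.add_im, Complex.mul_re, Complex.mul_im,
        Complex.exp_ofReal_mul_I_re, Complex.exp_ofReal_mul_I_im, Real.cos_sub]
  nlinarith [Real.sin_sq_add_cos_sq θ₁, Real.sin_sq_add_cos_sq θ₂]

theorem stmt8 {k : ℕ} (a : Fin k → ℂ) (ω : Fin k → ℤ) (hω : Function.Injective ω)
    (N : ℕ) (hN : 1 < N)
    (p : ℕ) (hp : 1 < p) (h : ℕ) (hh : h < p)
    (j₁ j₂ : Fin k) (hj : j₁ ≠ j₂)
    (hrange₁ : -(N : ℤ) ≤ 2 * ω j₁ ∧ 2 * ω j₁ < (N : ℤ))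
    (hrange₂ : -(N : ℤ) ≤ 2 * ω j₂ ∧ 2 * ω j₂ < (N : ℤ))
    (hpair : aliasIdx ω p h = {j₁, j₂})
    (ha₁ : (a j₁).im = 0) (ha₂ : (a j₂).im = 0)
    (ha₁0 : a j₁ ≠ 0) (ha₂0 : a j₂ ≠ 0)
    (c b : ℤ) (hcb : IsCoprime c b) (hc : c ≠ 0) (hb : (N : ℤ) ≤ b)
    (ε : ℝ) (hε : ε = (c : ℝ) / (b : ℝ)) :
    ‖sdft a ω p ε h‖ ≠ ‖sdft a ω p 0 h‖ := by
  have hp0 : 0 < p := lt_trans one_pos hp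
  have hfilter : Finset.univ.filter (fun j => (p : ℤ) ∣ (ω j - h)) = aliasIdx ω p h := by
    ext j
    simp only [Finset.mem_filter, Finset.mem_univ, true_and, aliasIdx]
    rw [Int.modEq_iff_dvd, dvd_sub_comm]
  have key : ∀ ε' : ℝ, sdft a ω p ε' h
      = (p : ℂ) * ∑ j ∈ aliasIdx ω p h,
          a j * Complex.exp (2 * (Real.pi : ℂ) * Complex.I * (ω j : ℂ) * (ε' : ℂ)) := by
    intro ε'
    rw [← hfilter, ← sdft_eq' a ω p hp0 ε' h]
    rfl
  -- write coefficients as reals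
  set r₁ : ℝ := (a j₁).re with hr₁
  set r₂ : ℝ := (a j₂).re with hr₂
  have har₁ : a j₁ = (r₁ : ℂ) := Complex.ext rfl ha₁
  have har₂ : a j₂ = (r₂ : ℂ) := Complex.ext rfl ha₂
  have hr₁0 : r₁ ≠ 0 := fun h0 => ha₁0 (by rw [har₁, h0]; simp)
  have hr₂0 : r₂ ≠ 0 := fun h0 => ha₂0 (by rw [har₂, h0]; simp)
  have hE : ∀ (m : ℤ) (ε' : ℝ), Complex.exp (2 * (Real.pi : ℂ) * Complex.I * (m : ℂ) * (ε' : ℂ))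
      = Complex.exp (((2 * Real.pi * (m : ℝ) * ε' : ℝ) : ℂ) * Complex.I) := by
    intro m ε'
    congr 1
    push_cast
    ring
  have hsum : ∀ ε' : ℝ, ∑ j ∈ aliasIdx ω p h,
      a j * Complex.exp (2 * (Real.pi : ℂ) * Complex.I * (ω j : ℂ) * (ε' : ℂ))
      = (r₁ : ℂ) * Complex.exp (((2 * Real.pi * (ω j₁ : ℝ) * ε' : ℝ) : ℂ) * Complex.I)
        + (r₂ : ℂ) * Complex.exp (((2 * Real.pi * (ω j₂ : ℝ) * ε' : ℝ) : ℂ) * Complex.I) := by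
    intro ε'
    rw [hpair, Finset.sum_pair hj, har₁, har₂, hE, hE]
  intro H
  rw [key ε, key 0, hsum ε, hsum 0] at H
  rw [norm_mul, norm_mul] at H
  have hpc : ‖(p : ℂ)‖ ≠ 0 := by
    simp [Complex.norm_natCast, hp0.ne']
  have H2 := mul_left_cancel₀ hpc H
  have H3 := congrArg (· ^ 2) H2
  simp only [Complex.sq_norm] at H3
  rw [normSq_combo, normSq_combo] at H3
  have hΔ : Real.cos (2 * Real.pi * (ω j₁ : ℝ) * ε - 2 * Real.pi * (ω j₂ : ℝ) * ε) = 1 := by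
    have h0 : (2 * Real.pi * (ω j₁ : ℝ) * 0 - 2 * Real.pi * (ω j₂ : ℝ) * 0) = 0 := by ring
    rw [h0, Real.cos_zero] at H3
    have hr : (2 : ℝ) * r₁ * r₂ ≠ 0 := by
      exact mul_ne_zero (mul_ne_zero two_ne_zero hr₁0) hr₂0
    have hlin : (2 : ℝ) * r₁ * r₂ * Real.cos (2 * Real.pi * (ω j₁ : ℝ) * ε - 2 * Real.pi * (ω j₂ : ℝ) * ε)
        = 2 * r₁ * r₂ * 1 := by linarith
    exact mul_left_cancel₀ hr hlin
  rw [Real.cos_eq_one_iff] at hΔ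
  obtain ⟨n, hn⟩ := hΔ
  have hbZ : (0 : ℤ) < b := lt_of_lt_of_le (by positivity) hb
  have hbr : (b : ℝ) ≠ 0 := Int.cast_ne_zero.2 hbZ.ne'
  rw [hε] at hn
  have h2π : (2 * Real.pi) ≠ 0 := by positivity
  have hZ : (n : ℝ) * b = ((ω j₁ - ω j₂ : ℤ) : ℝ) * c := by
    apply mul_left_cancel₀ h2π
    push_cast
    field_simp at hn
    rw [hn]; ring
  have hZint : n * b = (ω j₁ - ω j₂) * c := by exact_mod_cast hZ
  have hdvd : b ∣ (ω j₁ - ω j₂) * c := ⟨n, by rw [← hZint]; ring⟩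
  have hdvd2 : b ∣ (ω j₁ - ω j₂) := (hcb.symm).dvd_of_dvd_mul_right hdvd
  have hne : ω j₁ - ω j₂ ≠ 0 := sub_ne_zero.2 fun e => hj (hω e)
  have hle : b ≤ |ω j₁ - ω j₂| := Int.le_of_dvd (abs_pos.2 hne) ((dvd_abs _ _).2 hdvd2)
  have habs : |ω j₁ - ω j₂| < (N : ℤ) := by
    rw [abs_lt]
    omega
  omega
end

section
/- (Lemma 2.) Let N > 1 be an integer, M > 1 a real number, and let ω₁, …, ω_k be distinct integers in [−N/2, N/2). Let p₁, …, p_L be pairwise relatively prime positive integers with p_ℓ ≥ M for all ℓ, where L ≥ 1 + (k − 1)·⌊log_M N⌋. Then every frequency is isolated modulo at least one sample length: for each j ∈ {1,…,k} there exists ℓ ∈ {1,…,L} such that ω_j ≢ ω_m (mod p_ℓ) for all m ≠ j. -/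
theorem stmt9 (N : ℕ) (hN : 1 < N) (M : ℝ) (hM : 1 < M)
    (k : ℕ) (ω : Fin k → ℤ) (hω : Function.Injective ω)
    (hrange : ∀ j, -(N : ℤ) ≤ 2 * ω j ∧ 2 * ω j < (N : ℤ))
    (L : ℕ) (p : Fin L → ℕ)
    (hcop : ∀ ℓ ℓ' : Fin L, ℓ ≠ ℓ' → Nat.Coprime (p ℓ) (p ℓ'))
    (hpM : ∀ ℓ, M ≤ (p ℓ : ℝ))
    (hL : 1 + (k - 1) * ⌊Real.logb M (N : ℝ)⌋₊ ≤ L) :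
    ∀ j : Fin k, ∃ ℓ : Fin L, ∀ m : Fin k, m ≠ j → ¬ (ω m ≡ ω j [ZMOD (p ℓ : ℤ)]) := by
  intro j
  by_contra hcon
  push_neg at hcon
  choose f hfne hmod using hcon
  set F := ⌊Real.logb M (N : ℝ)⌋₊ with hF
  have hM0 : (0:ℝ) < M := by linarith
  have key : ∀ m : Fin k, m ≠ j →
      (Finset.univ.filter (fun ℓ : Fin L => f ℓ = m)).card ≤ F := by
    intro m hm
    set S := Finset.univ.filter (fun ℓ : Fin L => f ℓ = m) with hS
    set d := ω j - ω m with hd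
    have hd0 : d ≠ 0 := sub_ne_zero.mpr (fun h => hm (hω h.symm))
    have hdvd : ∀ ℓ ∈ S, (p ℓ : ℤ) ∣ d := by
      intro ℓ hℓ
      rw [hS, Finset.mem_filter] at hℓ
      have h1 := (hmod ℓ).dvd
      rw [hℓ.2] at h1
      exact h1
    have hpair : (↑S : Set (Fin L)).Pairwise (Function.onFun IsCoprime fun ℓ => (p ℓ : ℤ)) := by
      intro a _ b _ hab
      exact Int.isCoprime_iff_gcd_eq_one.mpr (hcop a b hab)
    have hproddvd : (∏ ℓ ∈ S, (p ℓ : ℤ)) ∣ d := Finset.prod_dvd_of_coprime hpair hdvd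
    have hprodle : (∏ ℓ ∈ S, (p ℓ : ℤ)) ≤ |d| :=
      Int.le_of_dvd (abs_pos.mpr hd0) (hproddvd.trans ((dvd_abs d d).mpr dvd_rfl))
    have hdN : |d| < (N : ℤ) := by
      have h1 := hrange j
      have h2 := hrange m
      have habs : |2 * d| < 2 * (N : ℤ) := by
        rw [abs_lt]; constructor <;> [skip; skip] <;> simp only [hd] <;> push_cast <;> omega
      rw [abs_mul, abs_two] at habs
      linarith
    have hprodN : (∏ ℓ ∈ S, (p ℓ : ℤ)) < (N : ℤ) := lt_of_le_of_lt hprodle hdN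
    have hrealprod : M ^ S.card ≤ ∏ ℓ ∈ S, ((p ℓ : ℝ)) := by
      rw [← Finset.prod_const]
      exact Finset.prod_le_prod (fun _ _ => le_of_lt hM0) (fun ℓ _ => hpM ℓ)
    have hcast : (∏ ℓ ∈ S, ((p ℓ : ℝ))) < (N : ℝ) := by
      have : ((∏ ℓ ∈ S, (p ℓ : ℤ)) : ℝ) < ((N : ℤ) : ℝ) := by exact_mod_cast hprodN
      push_cast at this ⊢
      linarith
    have hpow : M ^ S.card < (N : ℝ) := lt_of_le_of_lt hrealprod hcast
    have hlog : (S.card : ℝ) * Real.log M < Real.log N := by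
      have := Real.log_lt_log (pow_pos hM0 S.card) hpow
      rwa [Real.log_pow] at this
    have hlogM : 0 < Real.log M := Real.log_pos hM
    have : (S.card : ℝ) ≤ Real.logb M N := by
      rw [Real.logb, le_div_iff₀ hlogM]
      linarith
    exact Nat.le_floor this
  have hmap : ∀ ℓ ∈ (Finset.univ : Finset (Fin L)), f ℓ ∈ Finset.univ.erase j := by
    intro ℓ _
    exact Finset.mem_erase.mpr ⟨hfne ℓ, Finset.mem_univ _⟩
  have hcount := Finset.card_eq_sum_card_fiberwise hmap
  have hsum : ∑ m ∈ Finset.univ.erase j,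
      (Finset.univ.filter (fun ℓ : Fin L => f ℓ = m)).card ≤ (k - 1) * F := by
    calc ∑ m ∈ Finset.univ.erase j, (Finset.univ.filter (fun ℓ : Fin L => f ℓ = m)).card
        ≤ ∑ m ∈ Finset.univ.erase j, F :=
          Finset.sum_le_sum (fun m hm => key m (Finset.mem_erase.mp hm).1)
      _ = (k - 1) * F := by
          rw [Finset.sum_const, smul_eq_mul, Finset.card_erase_of_mem (Finset.mem_univ j),
            Finset.card_univ, Fintype.card_fin]
  rw [Finset.card_univ, Fintype.card_fin] at hcount
  omega
end

section
/- Let p > 1 be a real number, let A be the 2×2 real matrix A = [[1 − 2/p, −1/p], [1/p, 1]], and let k ≥ 1 be an integer. Then the matrix geometric sum applied to the first standard basis vector satisfies (∑_{m=0}^{k−1} A^m) · (1, 0)ᵀ = ( k(1 − 1/p)^{k−1}, p(1 − (1 − 1/p)^k) − k(1 − 1/p)^{k−1} )ᵀ. -/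
open Matrix

theorem stmt15 (p : ℝ) (hp : 1 < p)
    (A : Matrix (Fin 2) (Fin 2) ℝ) (hA : A = !![1 - 2/p, -1/p; 1/p, 1])
    (k : ℕ) (hk : 1 ≤ k) :
    (∑ m ∈ Finset.range k, A ^ m) *ᵥ ![1, 0] =
      ![(k : ℝ) * (1 - 1/p) ^ (k - 1),
        p * (1 - (1 - 1/p) ^ k) - (k : ℝ) * (1 - 1/p) ^ (k - 1)] := by
  have hp0 : p ≠ 0 := by linarith
  obtain ⟨n, rfl⟩ : ∃ n, k = n + 1 := ⟨k - 1, (Nat.succ_pred_eq_of_pos hk).symm⟩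
  clear hk
  induction n with
  | zero =>
      funext i
      fin_cases i <;>
        simp [Finset.sum_range_one, Matrix.one_mulVec] <;> field_simp <;> ring
  | succ n ih =>
      rw [geom_sum_succ, Matrix.add_mulVec, Matrix.one_mulVec,
        ← Matrix.mulVec_mulVec, ih]
      funext i
      fin_cases i <;>
        · simp [hA, Matrix.mulVec, dotProduct, Fin.sum_univ_two, pow_succ]
          push_cast
          field_simp
          ring
end
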